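/- In the setting of the non-asymptotic EnKF error estimator (Theorem 1), with its absolute constants c₁, c₂ > 0 and its error terms E₁, E₂, E₃, E₄, E₅, let p ∈ (0,1), set c_m = max{1/c₂, c₁}, and let ε > 0. If N ≥ c_m·log(11/(1 − p))·max{ 4‖C‖∞²/t(ε)², 16n‖C^{1/2}‖∞²/t(ε)², 16m‖Σ^{1/2}‖∞²/t(ε)², 4n‖C^{1/2}‖∞²/ε², ‖C‖∞²/ε² }, where t(ε) = −‖C‖∞ + √(‖C‖∞² + 4ε), then E₃(ε,C) ≤ (1 − p)/11, E₄(ε,C) ≤ (1 − p)/11, E₅(ε,C,Σ) ≤ (1 − p)/11, E₁(ε,C) ≤ (1 − p)/11, and E₂(ε,C) ≤ (1 − p)/11, and consequently 1 − 6E₃(ε,C) − E₄(ε,C) − E₅(ε,C,Σ) − E₁(ε,C) − 2E₂(ε,C) ≥ p. -/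

import Mathlib

open Matrix

/-- The induced `ℓ∞` operator norm of a matrix (maximum absolute row sum). -/
noncomputable def matNormInf {k l : ℕ} (M : Matrix (Fin k) (Fin l) ℝ) : ℝ :=
  ⨆ i, ∑ j, |M i j|

open scoped ComplexOrder in
/-- The positive semidefinite square root of a positive semidefinite matrix
(removed from Mathlib; restated with its former definition). -/
noncomputable def Matrix.PosSemidef.sqrt {n : Type*} [Fintype n] [DecidableEq n]
    {𝕜 : Type*} [RCLike 𝕜] {A : Matrix n n 𝕜} (hA : A.PosSemidef) : Matrix n n 𝕜 :=
  hA.1.eigenvectorUnitary.1 * diagonal ((↑) ∘ (√·) ∘ hA.1.eigenvalues) *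
  (star hA.1.eigenvectorUnitary : Matrix n n 𝕜)

lemma posSemidef_sqrt_mul_self_real {k : ℕ} {A : Matrix (Fin k) (Fin k) ℝ} (hA : A.PosSemidef) :
    hA.sqrt * hA.sqrt = A := by
  have hU : (star hA.1.eigenvectorUnitary : Matrix (Fin k) (Fin k) ℝ) * hA.1.eigenvectorUnitary.1 = 1 :=
    Matrix.mem_unitaryGroup_iff'.1 hA.1.eigenvectorUnitary.2
  conv_rhs => rw [hA.1.spectral_theorem]
  simp only [Matrix.PosSemidef.sqrt, Unitary.conjStarAlgAut_apply]
  have gen : ∀ (U D : Matrix (Fin k) (Fin k) ℝ), star U * U = 1 →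
      U * D * star U * (U * D * star U) = U * (D * D) * star U := by
    intro U D h
    calc U * D * star U * (U * D * star U) = U * D * (star U * U) * D * star U := by
          simp only [Matrix.mul_assoc]
      _ = U * (D * D) * star U := by rw [h, Matrix.mul_one, Matrix.mul_assoc U D D]
  rw [gen _ _ hU, diagonal_mul_diagonal]
  congr 3
  funext i
  simp [Real.mul_self_sqrt (hA.eigenvalues_nonneg i)]

lemma matNormInf_pos {k l : ℕ} {M : Matrix (Fin k) (Fin l) ℝ} (h : M ≠ 0) :
    0 < matNormInf M := by
  obtain ⟨i, j, hij⟩ : ∃ i j, M i j ≠ 0 := by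
    by_contra h'
    push_neg at h'
    exact h (by ext i j; simpa using h' i j)
  have h1 : (0:ℝ) < ∑ j, |M i j| :=
    Finset.sum_pos' (fun _ _ => abs_nonneg _) ⟨j, Finset.mem_univ j, abs_pos.2 hij⟩
  unfold matNormInf
  refine h1.trans_le ?_
  apply le_ciSup (f := fun i => ∑ j, |M i j|) (Set.Finite.bddAbove (Set.finite_range _)) i

lemma posdef_ne_zero {k : ℕ} (hk : 1 ≤ k) {M : Matrix (Fin k) (Fin k) ℝ} (h : M.PosDef) :
    M ≠ 0 := by
  intro h0
  have hx : (fun _ : Fin k => (1:ℝ)) ≠ 0 := by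
    intro hx
    have := congrFun hx ⟨0, hk⟩
    simp at this
  have := h.2 (show Finsupp.single (⟨0, hk⟩ : Fin k) (1:ℝ) ≠ 0 by simp)
  rw [h0] at this
  simp at this

/-- **Remark 5, sample-size sufficiency.** For any positive constants `c₁, c₂`,
if the ensemble size `N` satisfies the bound (26), then each error term `E₁,…,E₅` is at most
`(1 − p)/11`, and consequently the probability bound of Theorem 1 is at least `p`. -/
theorem enkf_sample_size_sufficiency {n m : ℕ} (hn : 1 ≤ n) (hm : 1 ≤ m)
    (C : Matrix (Fin n) (Fin n) ℝ) (Sig : Matrix (Fin m) (Fin m) ℝ)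
    (hC : C.PosDef) (hSig : Sig.PosDef)
    (c₁ c₂ : ℝ) (hc₁ : 0 < c₁) (hc₂ : 0 < c₂)
    (p : ℝ) (hp0 : 0 < p) (hp1 : p < 1)
    (ε : ℝ) (hε : 0 < ε) (N : ℕ) (hN : 1 ≤ N) :
    let cm : ℝ := max (1 / c₂) c₁
    let nC : ℝ := matNormInf C
    let nChalf : ℝ := matNormInf hC.posSemidef.sqrt
    let nShalf : ℝ := matNormInf hSig.posSemidef.sqrt
    let t : ℝ := -nC + Real.sqrt (nC ^ 2 + 4 * ε)
    let s : ℝ := t / 2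
    let E₁ : ℝ := Real.exp (-(1 / (4 * c₁ * n)) * (ε * Real.sqrt N / nChalf) ^ 2)
    let E₂ : ℝ := Real.exp (-c₂ * N * ε ^ 2 / nC ^ 2)
    let E₃ : ℝ := Real.exp (-c₂ * N * s ^ 2 / nC ^ 2)
    let E₄ : ℝ := Real.exp (-(N * s ^ 2) / (4 * c₁ * n * nChalf ^ 2))
    let E₅ : ℝ := Real.exp (-(N * s ^ 2) / (4 * c₁ * m * nShalf ^ 2))
    (N : ℝ) ≥ cm * Real.log (11 / (1 - p)) *
        max (4 * nC ^ 2 / t ^ 2)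
          (max (16 * n * nChalf ^ 2 / t ^ 2)
            (max (16 * m * nShalf ^ 2 / t ^ 2)
              (max (4 * n * nChalf ^ 2 / ε ^ 2) (nC ^ 2 / ε ^ 2)))) →
    E₃ ≤ (1 - p) / 11 ∧ E₄ ≤ (1 - p) / 11 ∧ E₅ ≤ (1 - p) / 11 ∧
      E₁ ≤ (1 - p) / 11 ∧ E₂ ≤ (1 - p) / 11 ∧
      1 - 6 * E₃ - E₄ - E₅ - E₁ - 2 * E₂ ≥ p := by
  intro cm nC nChalf nShalf t s E₁ E₂ E₃ E₄ E₅ hbound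
  set L : ℝ := Real.log (11 / (1 - p)) with hLdef
  have hE1d : E₁ = Real.exp (-(1 / (4 * c₁ * n)) * (ε * Real.sqrt N / nChalf) ^ 2) := rfl
  have hE2d : E₂ = Real.exp (-c₂ * N * ε ^ 2 / nC ^ 2) := rfl
  have hE3d : E₃ = Real.exp (-c₂ * N * s ^ 2 / nC ^ 2) := rfl
  have hE4d : E₄ = Real.exp (-(N * s ^ 2) / (4 * c₁ * n * nChalf ^ 2)) := rfl
  have hE5d : E₅ = Real.exp (-(N * s ^ 2) / (4 * c₁ * m * nShalf ^ 2)) := rfl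
  rw [hE1d, hE2d, hE3d, hE4d, hE5d]
  -- basic positivity facts
  have hp' : (0:ℝ) < 1 - p := by linarith
  have hn' : (0:ℝ) < n := by exact_mod_cast Nat.lt_of_lt_of_le Nat.zero_lt_one hn
  have hm' : (0:ℝ) < m := by exact_mod_cast Nat.lt_of_lt_of_le Nat.zero_lt_one hm
  have hnC : 0 < nC := matNormInf_pos (posdef_ne_zero hn hC)
  have hCne : C ≠ 0 := posdef_ne_zero hn hC
  have hSne : Sig ≠ 0 := posdef_ne_zero hm hSig
  have hnCh : 0 < nChalf := matNormInf_pos (by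
    intro h0
    exact hCne (by rw [← posSemidef_sqrt_mul_self_real hC.posSemidef, h0, mul_zero]))
  have hnSh : 0 < nShalf := matNormInf_pos (by
    intro h0
    exact hSne (by rw [← posSemidef_sqrt_mul_self_real hSig.posSemidef, h0, mul_zero]))
  have ht : 0 < t := by
    have h1 : nC < Real.sqrt (nC ^ 2 + 4 * ε) := by
      rw [show nC = Real.sqrt (nC ^ 2) by rw [Real.sqrt_sq hnC.le]]
      exact Real.sqrt_lt_sqrt (by positivity) (by nlinarith [Real.sq_sqrt (by positivity : (0:ℝ) ≤ nC ^ 2)])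
    show 0 < -nC + Real.sqrt (nC ^ 2 + 4 * ε)
    linarith
  have hs2 : s ^ 2 = t ^ 2 / 4 := by show (t / 2) ^ 2 = t ^ 2 / 4; ring
  have hL : 0 < L := Real.log_pos (by rw [lt_div_iff₀ hp']; linarith)
  have hcm1 : 1 / c₂ ≤ cm := le_max_left _ _
  have hcm2 : c₁ ≤ cm := le_max_right _ _
  have hcm0 : 0 < cm := lt_of_lt_of_le hc₁ hcm2
  clear_value cm nC nChalf nShalf t s E₁ E₂ E₃ E₄ E₅
  clear hE1d hE2d hE3d hE4d hE5d
  -- extract the five lower bounds on N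
  have hNA : cm * L * (4 * nC ^ 2 / t ^ 2) ≤ (N:ℝ) :=
    le_trans (mul_le_mul_of_nonneg_left (le_max_left _ _) (by positivity)) hbound
  have hNB : cm * L * (16 * n * nChalf ^ 2 / t ^ 2) ≤ (N:ℝ) :=
    le_trans (mul_le_mul_of_nonneg_left ((le_max_left _ _).trans (le_max_right _ _)) (by positivity)) hbound
  have hNC : cm * L * (16 * m * nShalf ^ 2 / t ^ 2) ≤ (N:ℝ) :=
    le_trans (mul_le_mul_of_nonneg_left (((le_max_left _ _).trans (le_max_right _ _)).trans (le_max_right _ _)) (by positivity)) hbound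
  have hND : cm * L * (4 * n * nChalf ^ 2 / ε ^ 2) ≤ (N:ℝ) :=
    le_trans (mul_le_mul_of_nonneg_left ((((le_max_left _ _).trans (le_max_right _ _)).trans (le_max_right _ _)).trans (le_max_right _ _)) (by positivity)) hbound
  have hNE : cm * L * (nC ^ 2 / ε ^ 2) ≤ (N:ℝ) :=
    le_trans (mul_le_mul_of_nonneg_left ((((le_max_right _ _).trans (le_max_right _ _)).trans (le_max_right _ _)).trans (le_max_right _ _)) (by positivity)) hbound
  -- the exponential bound
  have hexp : ∀ a : ℝ, a ≤ -L → Real.exp a ≤ (1 - p) / 11 := by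
    intro a ha
    have h11 : (0:ℝ) < (1 - p) / 11 := by positivity
    calc Real.exp a ≤ Real.exp (-L) := Real.exp_le_exp.2 ha
      _ = (1 - p) / 11 := by
        rw [hLdef, ← Real.log_inv, Real.exp_log (by positivity), inv_div]
  -- E₃
  have hE3 : Real.exp (-c₂ * (N:ℝ) * s ^ 2 / nC ^ 2) ≤ (1 - p) / 11 := by
    apply hexp
    have e : -c₂ * (N:ℝ) * s ^ 2 / nC ^ 2 = -(c₂ * N * s ^ 2 / nC ^ 2) := by ring
    rw [e, neg_le_neg_iff]
    rw [le_div_iff₀ (by positivity)]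
    have h1 : 1 / c₂ * L * (4 * nC ^ 2 / t ^ 2) ≤ (N:ℝ) :=
      le_trans (mul_le_mul_of_nonneg_right (mul_le_mul_of_nonneg_right hcm1 hL.le) (by positivity)) hNA
    have e2 : 1 / c₂ * L * (4 * nC ^ 2 / t ^ 2) = L * (4 * nC ^ 2) / (c₂ * t ^ 2) := by
      field_simp
    rw [e2, div_le_iff₀ (by positivity)] at h1
    rw [hs2]
    linarith [h1]
  -- E₄
  have hE4 : Real.exp (-((N:ℝ) * s ^ 2) / (4 * c₁ * n * nChalf ^ 2)) ≤ (1 - p) / 11 := by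
    apply hexp
    have e : -((N:ℝ) * s ^ 2) / (4 * c₁ * n * nChalf ^ 2) = -((N:ℝ) * s ^ 2 / (4 * c₁ * n * nChalf ^ 2)) := by ring
    rw [e, neg_le_neg_iff, le_div_iff₀ (by positivity)]
    have h1 : c₁ * L * (16 * n * nChalf ^ 2 / t ^ 2) ≤ (N:ℝ) :=
      le_trans (mul_le_mul_of_nonneg_right (mul_le_mul_of_nonneg_right hcm2 hL.le) (by positivity)) hNB
    have e2 : c₁ * L * (16 * (n:ℝ) * nChalf ^ 2 / t ^ 2) = c₁ * L * (16 * n * nChalf ^ 2) / t ^ 2 := by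
      ring
    rw [e2, div_le_iff₀ (by positivity)] at h1
    rw [hs2]
    linarith [h1]
  -- E₅
  have hE5 : Real.exp (-((N:ℝ) * s ^ 2) / (4 * c₁ * m * nShalf ^ 2)) ≤ (1 - p) / 11 := by
    apply hexp
    have e : -((N:ℝ) * s ^ 2) / (4 * c₁ * m * nShalf ^ 2) = -((N:ℝ) * s ^ 2 / (4 * c₁ * m * nShalf ^ 2)) := by ring
    rw [e, neg_le_neg_iff, le_div_iff₀ (by positivity)]
    have h1 : c₁ * L * (16 * m * nShalf ^ 2 / t ^ 2) ≤ (N:ℝ) :=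
      le_trans (mul_le_mul_of_nonneg_right (mul_le_mul_of_nonneg_right hcm2 hL.le) (by positivity)) hNC
    have e2 : c₁ * L * (16 * (m:ℝ) * nShalf ^ 2 / t ^ 2) = c₁ * L * (16 * m * nShalf ^ 2) / t ^ 2 := by
      ring
    rw [e2, div_le_iff₀ (by positivity)] at h1
    rw [hs2]
    linarith [h1]
  -- E₁
  have hE1 : Real.exp (-(1 / (4 * c₁ * n)) * (ε * Real.sqrt N / nChalf) ^ 2) ≤ (1 - p) / 11 := by
    apply hexp
    have e : -(1 / (4 * c₁ * n)) * (ε * Real.sqrt N / nChalf) ^ 2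
        = -(ε ^ 2 * (N:ℝ) / (4 * c₁ * n * nChalf ^ 2)) := by
      rw [div_pow, mul_pow, Real.sq_sqrt (Nat.cast_nonneg N)]
      field_simp
    rw [e, neg_le_neg_iff, le_div_iff₀ (by positivity)]
    have h1 : c₁ * L * (4 * n * nChalf ^ 2 / ε ^ 2) ≤ (N:ℝ) :=
      le_trans (mul_le_mul_of_nonneg_right (mul_le_mul_of_nonneg_right hcm2 hL.le) (by positivity)) hND
    have e2 : c₁ * L * (4 * (n:ℝ) * nChalf ^ 2 / ε ^ 2) = c₁ * L * (4 * n * nChalf ^ 2) / ε ^ 2 := by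
      ring
    rw [e2, div_le_iff₀ (by positivity)] at h1
    linarith [h1]
  -- E₂
  have hE2 : Real.exp (-c₂ * (N:ℝ) * ε ^ 2 / nC ^ 2) ≤ (1 - p) / 11 := by
    apply hexp
    have e : -c₂ * (N:ℝ) * ε ^ 2 / nC ^ 2 = -(c₂ * N * ε ^ 2 / nC ^ 2) := by ring
    rw [e, neg_le_neg_iff, le_div_iff₀ (by positivity)]
    have h1 : 1 / c₂ * L * (nC ^ 2 / ε ^ 2) ≤ (N:ℝ) :=
      le_trans (mul_le_mul_of_nonneg_right (mul_le_mul_of_nonneg_right hcm1 hL.le) (by positivity)) hNE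
    have e2 : 1 / c₂ * L * (nC ^ 2 / ε ^ 2) = L * nC ^ 2 / (c₂ * ε ^ 2) := by
      field_simp
    rw [e2, div_le_iff₀ (by positivity)] at h1
    linarith [h1]
  exact ⟨hE3, hE4, hE5, hE1, hE2, by linarith⟩
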